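/- For any fixed p, q ∈ ℝ and n ∈ ℕ, the map (A, B) ∈ P_n × P_n ↦ Tr X* A^p X B^q is jointly concave (respectively, jointly convex) for all X ∈ M_n if and only if the map (A, B) ∈ P_n × P_n ↦ A^p ⊗ B^q is jointly concave (respectively, jointly convex) with respect to the positive semidefinite order. -/

import Mathlib

open scoped Matrix ComplexOrder Kronecker

variable {n : ℕ}

/-- Real matrix power of a positive definite matrix via continuous functional calculus. -/
noncomputable def mpow (A : Matrix (Fin n) (Fin n) ℂ) (p : ℝ) : Matrix (Fin n) (Fin n) ℂ :=
  cfc (fun x => Real.rpow x p) A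

/-- Joint concavity of `(A,B) ↦ Tr X* A^p X B^q` on `P_n × P_n` for all `X`. -/
def TraceConcave (p q : ℝ) (n : ℕ) : Prop :=
  ∀ (X A₁ A₂ B₁ B₂ : Matrix (Fin n) (Fin n) ℂ),
    A₁.PosDef → A₂.PosDef → B₁.PosDef → B₂.PosDef →
    ∀ t : ℝ, t ∈ Set.Icc (0 : ℝ) 1 →
      t * (Xᴴ * mpow A₁ p * X * mpow B₁ q).trace.re +
          (1 - t) * (Xᴴ * mpow A₂ p * X * mpow B₂ q).trace.re ≤
        (Xᴴ * mpow (t • A₁ + (1 - t) • A₂) p * X * mpow (t • B₁ + (1 - t) • B₂) q).trace.re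

/-- Joint convexity of `(A,B) ↦ Tr X* A^p X B^q` on `P_n × P_n` for all `X`. -/
def TraceConvex (p q : ℝ) (n : ℕ) : Prop :=
  ∀ (X A₁ A₂ B₁ B₂ : Matrix (Fin n) (Fin n) ℂ),
    A₁.PosDef → A₂.PosDef → B₁.PosDef → B₂.PosDef →
    ∀ t : ℝ, t ∈ Set.Icc (0 : ℝ) 1 →
      (Xᴴ * mpow (t • A₁ + (1 - t) • A₂) p * X * mpow (t • B₁ + (1 - t) • B₂) q).trace.re ≤
        t * (Xᴴ * mpow A₁ p * X * mpow B₁ q).trace.re +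
          (1 - t) * (Xᴴ * mpow A₂ p * X * mpow B₂ q).trace.re

/-- Joint concavity of `(A,B) ↦ A^p ⊗ B^q` in the positive semidefinite order. -/
def KronConcave (p q : ℝ) (n : ℕ) : Prop :=
  ∀ (A₁ A₂ B₁ B₂ : Matrix (Fin n) (Fin n) ℂ),
    A₁.PosDef → A₂.PosDef → B₁.PosDef → B₂.PosDef →
    ∀ t : ℝ, t ∈ Set.Icc (0 : ℝ) 1 →
      (mpow (t • A₁ + (1 - t) • A₂) p ⊗ₖ mpow (t • B₁ + (1 - t) • B₂) q -
        (t • (mpow A₁ p ⊗ₖ mpow B₁ q) + (1 - t) • (mpow A₂ p ⊗ₖ mpow B₂ q))).PosSemidef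

/-- Joint convexity of `(A,B) ↦ A^p ⊗ B^q` in the positive semidefinite order. -/
def KronConvex (p q : ℝ) (n : ℕ) : Prop :=
  ∀ (A₁ A₂ B₁ B₂ : Matrix (Fin n) (Fin n) ℂ),
    A₁.PosDef → A₂.PosDef → B₁.PosDef → B₂.PosDef →
    ∀ t : ℝ, t ∈ Set.Icc (0 : ℝ) 1 →
      (t • (mpow A₁ p ⊗ₖ mpow B₁ q) + (1 - t) • (mpow A₂ p ⊗ₖ mpow B₂ q) -
        mpow (t • A₁ + (1 - t) • A₂) p ⊗ₖ mpow (t • B₁ + (1 - t) • B₂) q).PosSemidef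

/-! ### Auxiliary lemmas -/

/-- `Tr(Xᴴ M X N)` as a quadratic form of the Kronecker product `M ⊗ₖ Nᵀ` at `vec X`. -/
lemma trace_quadform (M N X : Matrix (Fin n) (Fin n) ℂ) :
    (Xᴴ * M * X * N).trace =
      star (fun ij : Fin n × Fin n => X ij.1 ij.2) ⬝ᵥ
        ((M ⊗ₖ Nᵀ) *ᵥ fun ij : Fin n × Fin n => X ij.1 ij.2) := by
  simp only [Matrix.trace, Matrix.diag, Matrix.mul_apply, Matrix.conjTranspose_apply,
    dotProduct, Matrix.mulVec, Matrix.kroneckerMap_apply, Matrix.transpose_apply,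
    Fintype.sum_prod_type, Pi.star_apply, Finset.sum_mul, Finset.mul_sum]
  conv_lhs => enter [2, x, 2, x1]; rw [Finset.sum_comm]
  conv_lhs => enter [2, x]; rw [Finset.sum_comm]
  rw [Finset.sum_comm]
  conv_rhs => enter [2, i, 2, j]; rw [Finset.sum_comm]
  exact Finset.sum_congr rfl fun i _ => Finset.sum_congr rfl fun j _ =>
    Finset.sum_congr rfl fun l _ => Finset.sum_congr rfl fun k _ => by ring

/-- Entrywise conjugation as an `ℝ`-star-algebra homomorphism of matrices. -/
def conjSAH (n : ℕ) : Matrix (Fin n) (Fin n) ℂ →⋆ₐ[ℝ] Matrix (Fin n) (Fin n) ℂ where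
  toFun A := A.map (starRingEnd ℂ)
  map_one' := by simp [Matrix.map_one]
  map_mul' A B := by
    ext i j
    simp [Matrix.map_apply, Matrix.mul_apply, map_sum]
  map_zero' := by simp
  map_add' A B := by ext i j; simp
  commutes' r := by
    ext i j
    simp [Matrix.algebraMap_matrix_apply]
    split <;> simp
  map_star' A := by
    ext i j
    simp [Matrix.conjTranspose_apply, Matrix.map_apply]

lemma conjSAH_apply (A : Matrix (Fin n) (Fin n) ℂ) (i j : Fin n) :
    (conjSAH n) A i j = (starRingEnd ℂ) (A i j) := rfl

lemma conjSAH_continuous : Continuous (conjSAH n) := by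
  apply continuous_matrix
  intro i j
  exact Complex.continuous_conj.comp ((continuous_apply j).comp (continuous_apply i))

/-- For a Hermitian matrix, entrywise conjugation is transposition. -/
lemma conjSAH_eq_transpose {A : Matrix (Fin n) (Fin n) ℂ} (hA : A.IsHermitian) :
    (conjSAH n) A = Aᵀ := by
  ext i j
  rw [conjSAH_apply, Matrix.transpose_apply, ← hA.apply i j]
  simp

/-- `mpow` commutes with transposition of Hermitian matrices. -/
lemma mpow_transpose {A : Matrix (Fin n) (Fin n) ℂ} (hA : A.IsHermitian) (p : ℝ) :
    mpow Aᵀ p = (mpow A p)ᵀ := by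
  have hsa : IsSelfAdjoint A := hA
  have hfin : (spectrum ℝ A).Finite := by
    rw [hA.spectrum_real_eq_range_eigenvalues]
    exact Set.finite_range _
  have : Finite (spectrum ℝ A) := hfin
  have hcs : CompactSpace (spectrum ℝ A) := Finite.compactSpace
  have hcont : ContinuousOn (fun x => Real.rpow x p) (spectrum ℝ A) := by
    rw [continuousOn_iff_continuous_restrict]
    exact continuous_of_discreteTopology
  have hφa : IsSelfAdjoint ((conjSAH n) A) := by
    rw [conjSAH_eq_transpose hA]; exact hA.transpose
  have key := StarAlgHomClass.map_cfc (conjSAH n) (fun x => Real.rpow x p) A hcont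
    conjSAH_continuous hsa hφa
  have hsel : (cfc (fun x => Real.rpow x p) A).IsHermitian := cfc_predicate _ A
  rw [conjSAH_eq_transpose hA, conjSAH_eq_transpose hsel] at key
  exact key.symm

lemma kron_isHermitian {A B : Matrix (Fin n) (Fin n) ℂ}
    (hA : A.IsHermitian) (hB : B.IsHermitian) : (A ⊗ₖ B).IsHermitian := by
  ext ⟨i, j⟩ ⟨k, l⟩
  simp only [Matrix.conjTranspose_apply, Matrix.kroneckerMap_apply, star_mul']
  rw [← hA.apply i k, ← hB.apply j l]

lemma isHermitian_real_smul {m : Type*} {A : Matrix m m ℂ}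
    (hA : A.IsHermitian) (t : ℝ) : (t • A).IsHermitian := by
  have h : (t • A)ᴴ = t • Aᴴ := by
    ext i j
    simp [Matrix.conjTranspose_apply]
  rw [Matrix.IsHermitian, h, hA]

lemma posSemidef_of_re_nonneg {m : Type*} [Fintype m] {D : Matrix m m ℂ} (hD : D.IsHermitian)
    (h : ∀ v : m → ℂ, 0 ≤ (star v ⬝ᵥ D *ᵥ v).re) : D.PosSemidef := by
  refine Matrix.PosSemidef.of_dotProduct_mulVec_nonneg hD fun v => ?_
  rw [Complex.nonneg_iff]
  refine ⟨h v, ?_⟩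
  have h1 : star (star v ⬝ᵥ D *ᵥ v) = star v ⬝ᵥ D *ᵥ v := by
    calc star (star v ⬝ᵥ D *ᵥ v) = star (D *ᵥ v) ⬝ᵥ v := by
          rw [Matrix.star_dotProduct, star_star]
      _ = star v ᵥ* Dᴴ ⬝ᵥ v := by rw [Matrix.star_mulVec]
      _ = star v ⬝ᵥ D *ᵥ v := by rw [hD, ← Matrix.dotProduct_mulVec]
  have h2 := congrArg Complex.im h1
  simp only [Complex.star_def, Complex.conj_im] at h2
  linarith

lemma psd_re_nonneg {m : Type*} [Fintype m] {D : Matrix m m ℂ} (hD : D.PosSemidef)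
    (v : m → ℂ) : 0 ≤ (star v ⬝ᵥ D *ᵥ v).re :=
  (Complex.nonneg_iff.mp (hD.dotProduct_mulVec_nonneg v)).1

lemma quad_expand (v : (Fin n × Fin n) → ℂ)
    (P Q R : Matrix (Fin n × Fin n) (Fin n × Fin n) ℂ) (t : ℝ) :
    (star v ⬝ᵥ ((P - (t • Q + (1 - t) • R)) *ᵥ v)).re
      = (star v ⬝ᵥ (P *ᵥ v)).re -
          (t * (star v ⬝ᵥ (Q *ᵥ v)).re + (1 - t) * (star v ⬝ᵥ (R *ᵥ v)).re) := by
  simp [Matrix.sub_mulVec, Matrix.add_mulVec, Matrix.smul_mulVec,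
    dotProduct_sub, dotProduct_add, dotProduct_smul,
    Complex.real_smul, Complex.sub_re, Complex.add_re, Complex.mul_re]

lemma quad_expand' (v : (Fin n × Fin n) → ℂ)
    (P Q R : Matrix (Fin n × Fin n) (Fin n × Fin n) ℂ) (t : ℝ) :
    (star v ⬝ᵥ (((t • Q + (1 - t) • R) - P) *ᵥ v)).re
      = (t * (star v ⬝ᵥ (Q *ᵥ v)).re + (1 - t) * (star v ⬝ᵥ (R *ᵥ v)).re) -
          (star v ⬝ᵥ (P *ᵥ v)).re := by
  simp [Matrix.sub_mulVec, Matrix.add_mulVec, Matrix.smul_mulVec,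
    dotProduct_sub, dotProduct_add, dotProduct_smul,
    Complex.real_smul, Complex.sub_re, Complex.add_re, Complex.mul_re]

/-- for fixed `p, q ∈ ℝ` and `n`, joint concavity (resp. convexity) of
`(A,B) ↦ Tr X* A^p X B^q` for all `X` is equivalent to joint concavity (resp. convexity)
of `(A,B) ↦ A^p ⊗ B^q` in the positive semidefinite order. -/
theorem stmt18 (p q : ℝ) (n : ℕ) :
    (TraceConcave p q n ↔ KronConcave p q n) ∧ (TraceConvex p q n ↔ KronConvex p q n) := by
  have hm : ∀ (A : Matrix (Fin n) (Fin n) ℂ) (r : ℝ), (mpow A r).IsHermitian :=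
    fun A r => cfc_predicate _ A
  constructor
  · constructor
    · -- TraceConcave → KronConcave
      intro hT A₁ A₂ B₁ B₂ hA₁ hA₂ hB₁ hB₂ t ht
      have hcB : (t • B₁ + (1 - t) • B₂).IsHermitian :=
        (isHermitian_real_smul hB₁.1 t).add (isHermitian_real_smul hB₂.1 (1 - t))
      apply posSemidef_of_re_nonneg
      · exact (kron_isHermitian (hm _ p) (hm _ q)).sub
          ((isHermitian_real_smul (kron_isHermitian (hm _ p) (hm _ q)) t).add
            (isHermitian_real_smul (kron_isHermitian (hm _ p) (hm _ q)) (1 - t)))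
      intro v
      set X : Matrix (Fin n) (Fin n) ℂ := Matrix.of fun i j => v (i, j) with hX
      have hv : v = fun ij : Fin n × Fin n => X ij.1 ij.2 := by
        funext ij; cases ij; rfl
      have htB : t • B₁ᵀ + (1 - t) • B₂ᵀ = (t • B₁ + (1 - t) • B₂)ᵀ := by
        ext i j; simp [Matrix.transpose_apply]
      have h := hT X A₁ A₂ B₁ᵀ B₂ᵀ hA₁ hA₂ hB₁.transpose hB₂.transpose t ht
      rw [htB, mpow_transpose hcB q, mpow_transpose hB₁.1 q, mpow_transpose hB₂.1 q] at h
      have e₀ := trace_quadform (mpow (t • A₁ + (1 - t) • A₂) p)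
        ((mpow (t • B₁ + (1 - t) • B₂) q)ᵀ) X
      have e₁ := trace_quadform (mpow A₁ p) ((mpow B₁ q)ᵀ) X
      have e₂ := trace_quadform (mpow A₂ p) ((mpow B₂ q)ᵀ) X
      rw [Matrix.transpose_transpose] at e₀ e₁ e₂
      rw [e₀, e₁, e₂] at h
      rw [hv, quad_expand]
      linarith
    · -- KronConcave → TraceConcave
      intro hK X A₁ A₂ B₁ B₂ hA₁ hA₂ hB₁ hB₂ t ht
      have hcB : (t • B₁ + (1 - t) • B₂).IsHermitian :=
        (isHermitian_real_smul hB₁.1 t).add (isHermitian_real_smul hB₂.1 (1 - t))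
      have htB : t • B₁ᵀ + (1 - t) • B₂ᵀ = (t • B₁ + (1 - t) • B₂)ᵀ := by
        ext i j; simp [Matrix.transpose_apply]
      have h := hK A₁ A₂ B₁ᵀ B₂ᵀ hA₁ hA₂ hB₁.transpose hB₂.transpose t ht
      rw [htB, mpow_transpose hcB q, mpow_transpose hB₁.1 q, mpow_transpose hB₂.1 q] at h
      have hre := psd_re_nonneg h (fun ij : Fin n × Fin n => X ij.1 ij.2)
      rw [quad_expand] at hre
      have e₀ := trace_quadform (mpow (t • A₁ + (1 - t) • A₂) p)
        (mpow (t • B₁ + (1 - t) • B₂) q) X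
      have e₁ := trace_quadform (mpow A₁ p) (mpow B₁ q) X
      have e₂ := trace_quadform (mpow A₂ p) (mpow B₂ q) X
      rw [e₀, e₁, e₂]
      linarith
  · constructor
    · -- TraceConvex → KronConvex
      intro hT A₁ A₂ B₁ B₂ hA₁ hA₂ hB₁ hB₂ t ht
      have hcB : (t • B₁ + (1 - t) • B₂).IsHermitian :=
        (isHermitian_real_smul hB₁.1 t).add (isHermitian_real_smul hB₂.1 (1 - t))
      apply posSemidef_of_re_nonneg
      · exact ((isHermitian_real_smul (kron_isHermitian (hm _ p) (hm _ q)) t).add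
            (isHermitian_real_smul (kron_isHermitian (hm _ p) (hm _ q)) (1 - t))).sub
          (kron_isHermitian (hm _ p) (hm _ q))
      intro v
      set X : Matrix (Fin n) (Fin n) ℂ := Matrix.of fun i j => v (i, j) with hX
      have hv : v = fun ij : Fin n × Fin n => X ij.1 ij.2 := by
        funext ij; cases ij; rfl
      have htB : t • B₁ᵀ + (1 - t) • B₂ᵀ = (t • B₁ + (1 - t) • B₂)ᵀ := by
        ext i j; simp [Matrix.transpose_apply]
      have h := hT X A₁ A₂ B₁ᵀ B₂ᵀ hA₁ hA₂ hB₁.transpose hB₂.transpose t ht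
      rw [htB, mpow_transpose hcB q, mpow_transpose hB₁.1 q, mpow_transpose hB₂.1 q] at h
      have e₀ := trace_quadform (mpow (t • A₁ + (1 - t) • A₂) p)
        ((mpow (t • B₁ + (1 - t) • B₂) q)ᵀ) X
      have e₁ := trace_quadform (mpow A₁ p) ((mpow B₁ q)ᵀ) X
      have e₂ := trace_quadform (mpow A₂ p) ((mpow B₂ q)ᵀ) X
      rw [Matrix.transpose_transpose] at e₀ e₁ e₂
      rw [e₀, e₁, e₂] at h
      rw [hv, quad_expand']
      linarith
    · -- KronConvex → TraceConvex
      intro hK X A₁ A₂ B₁ B₂ hA₁ hA₂ hB₁ hB₂ t ht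
      have hcB : (t • B₁ + (1 - t) • B₂).IsHermitian :=
        (isHermitian_real_smul hB₁.1 t).add (isHermitian_real_smul hB₂.1 (1 - t))
      have htB : t • B₁ᵀ + (1 - t) • B₂ᵀ = (t • B₁ + (1 - t) • B₂)ᵀ := by
        ext i j; simp [Matrix.transpose_apply]
      have h := hK A₁ A₂ B₁ᵀ B₂ᵀ hA₁ hA₂ hB₁.transpose hB₂.transpose t ht
      rw [htB, mpow_transpose hcB q, mpow_transpose hB₁.1 q, mpow_transpose hB₂.1 q] at h
      have hre := psd_re_nonneg h (fun ij : Fin n × Fin n => X ij.1 ij.2)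
      rw [quad_expand'] at hre
      have e₀ := trace_quadform (mpow (t • A₁ + (1 - t) • A₂) p)
        (mpow (t • B₁ + (1 - t) • B₂) q) X
      have e₁ := trace_quadform (mpow A₁ p) (mpow B₁ q) X
      have e₂ := trace_quadform (mpow A₂ p) (mpow B₂ q) X
      rw [e₀, e₁, e₂]
      linarith
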